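/- For every potential b : ℕ → ℝ, every T ≥ 1, and all controls f, g : ℕ → ℝ with f_t = g_t = 0 for t ≥ T, the connecting form admits the representation in terms of the response vector: Σ_{n=1}^{T} u^f_{n,T} u^g_{n,T} = Σ_{i=1}^{T} Σ_{j=1}^{T} C^T_{ij} f_{j−1} g_{i−1}, where C^T_{ij} = Σ_{k=0}^{T−max(i,j)} r_{|i−j|+2k}. -/

import Mathlib

/-- `sol b f t n` is the solution `u^f_{n,t}` of the discrete Schrödinger dynamical system
with potential `b` and boundary control `f`:
`u_{n,t+1} + u_{n,t-1} - u_{n+1,t} - u_{n-1,t} + b_n u_{n,t} = 0` for `n ≥ 1`, `t ≥ 0`,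
`u_{n,-1} = u_{n,0} = 0` for `n ≥ 1`, and `u_{0,t} = f_t` for `t ≥ 0`
(the first argument is the time `t`, the second the space variable `n`). -/
noncomputable def sol (b f : ℕ → ℝ) : ℕ → ℕ → ℝ
  | 0, n => if n = 0 then f 0 else 0
  | 1, n => if n = 0 then f 1 else
      sol b f 0 (n + 1) + sol b f 0 (n - 1) - b n * sol b f 0 n
  | (t + 2), n => if n = 0 then f (t + 2) else
      sol b f (t + 1) (n + 1) + sol b f (t + 1) (n - 1) - b n * sol b f (t + 1) n - sol b f t n

/-- The delta control: `δ_0 = 1`, `δ_t = 0` for `t ≥ 1`. -/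
noncomputable def delta : ℕ → ℝ := fun t => if t = 0 then 1 else 0

/-- The response vector of the potential `b`: `r_s = u^δ_{1,s+1}`. -/
noncomputable def resp (b : ℕ → ℝ) (s : ℕ) : ℝ := sol b delta (s + 1) 1

/-- The entries of the connecting matrix: `Cmat r T i j = Σ_{k=0}^{T - max i j} r_{|i-j| + 2k}`
(`i`, `j` are 1-based indices). -/
noncomputable def Cmat (r : ℕ → ℝ) (T i j : ℕ) : ℝ :=
  ∑ k ∈ Finset.range (T - max i j + 1), r (max i j - min i j + 2 * k)

lemma sol_zero (b f : ℕ → ℝ) (n : ℕ) : sol b f 0 n = if n = 0 then f 0 else 0 := by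
  rfl

lemma sol_bdry (b f : ℕ → ℝ) (t : ℕ) : sol b f t 0 = f t := by
  match t with
  | 0 => rfl
  | 1 => rfl
  | (t+2) => rfl

lemma sol_rec (b f : ℕ → ℝ) (t n : ℕ) (hn : n ≠ 0) :
    sol b f (t+2) n = sol b f (t + 1) (n + 1) + sol b f (t + 1) (n - 1)
      - b n * sol b f (t + 1) n - sol b f t n := by
  rw [sol, if_neg hn]

lemma sol_one (b f : ℕ → ℝ) (n : ℕ) (hn : n ≠ 0) :
    sol b f 1 n = if n = 1 then f 0 else 0 := by
  rw [sol, if_neg hn]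
  rcases Nat.eq_or_lt_of_le (Nat.one_le_iff_ne_zero.mpr hn) with h | h
  · simp [sol, ← h]
  · have h1 : n - 1 ≠ 0 := by omega
    have h2 : n ≠ 1 := by omega
    simp [sol, h1, h2, hn]

lemma sol_spatial (b f : ℕ → ℝ) : ∀ t n, t < n → sol b f t n = 0 := by
  intro t
  induction t using Nat.strong_induction_on with
  | _ t ih =>
    match t with
    | 0 => intro n hn; rw [sol_zero, if_neg (by omega)]
    | 1 => intro n hn; rw [sol_one b f n (by omega), if_neg (by omega)]
    | (t+2) =>
      intro n hn
      rw [sol_rec b f t n (by omega), ih (t+1) (by omega) (n+1) (by omega),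
        ih (t+1) (by omega) (n-1) (by omega), ih (t+1) (by omega) n (by omega),
        ih t (by omega) n (by omega)]
      ring

open Finset in
lemma sol_conv (b f : ℕ → ℝ) : ∀ t n, n ≠ 0 →
    sol b f t n = ∑ s ∈ Finset.range (t+1), f s * sol b delta (t - s) n := by
  intro t
  induction t using Nat.strong_induction_on with
  | _ t ih =>
    match t with
    | 0 =>
      intro n hn
      rw [sol_zero, if_neg hn]
      simp [sol_zero, hn]
    | 1 =>
      intro n hn
      rw [sol_one b f n hn]
      rw [Finset.sum_range_succ, Finset.sum_range_succ, Finset.sum_range_zero]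
      simp only [Nat.sub_self, Nat.sub_zero]
      rw [sol_one b delta n hn, sol_zero, if_neg hn]
      by_cases h1 : n = 1 <;> simp [h1, delta]
    | (t+2) =>
      intro n hn
      rw [sol_rec b f t n hn, ih (t+1) (by omega) (n+1) (by omega),
        ih (t+1) (by omega) n hn, ih t (by omega) n hn]
      -- handle the (n-1) term
      have hstep : sol b f (t+1) (n-1) =
          (∑ s ∈ Finset.range (t+1), f s * sol b delta (t + 1 - s) (n-1))
            + (if n = 1 then f (t+1) else 0) := by
        by_cases h1 : n = 1
        · subst h1
          simp only [Nat.sub_self]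
          rw [sol_bdry]
          have hz : ∀ s ∈ Finset.range (t+1), f s * sol b delta (t + 1 - s) 0 = 0 := by
            intro s hs
            rw [sol_bdry]
            have : t + 1 - s ≠ 0 := by simp at hs; omega
            simp [delta, this]
          rw [Finset.sum_eq_zero hz, zero_add]
          simp
        · rw [ih (t+1) (by omega) (n-1) (by omega), Finset.sum_range_succ]
          have : sol b delta (t + 1 - (t+1)) (n-1) = 0 := by
            simp only [Nat.sub_self]
            rw [sol_zero, if_neg (by omega)]
          rw [this, if_neg h1]; ring
      rw [hstep]
      -- RHS
      rw [show t + 2 + 1 = (t+2) + 1 from rfl,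
        Finset.sum_range_succ (fun s => f s * sol b delta (t + 2 - s) n) (t+2),
        Finset.sum_range_succ (fun s => f s * sol b delta (t + 2 - s) n) (t+1)]
      have hW0 : sol b delta (t + 2 - (t + 2)) n = 0 := by
        simp only [Nat.sub_self]; rw [sol_zero, if_neg hn]
      have hW1 : sol b delta (t + 2 - (t + 1)) n = if n = 1 then 1 else 0 := by
        have : t + 2 - (t+1) = 1 := by omega
        rw [this, sol_one b delta n hn]
        simp [delta]
      rw [Finset.sum_range_succ (fun s => f s * sol b delta (t + 1 - s) (n+1)) (t+1),
        Finset.sum_range_succ (fun s => f s * sol b delta (t + 1 - s) n) (t+1)]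
      have hA : sol b delta (t + 1 - (t+1)) (n+1) = 0 := by
        simp only [Nat.sub_self]; rw [sol_zero, if_neg (by omega)]
      have hB : sol b delta (t + 1 - (t+1)) n = 0 := by
        simp only [Nat.sub_self]; rw [sol_zero, if_neg hn]
      rw [hA, hB, hW0, hW1]
      have key : ∀ s ∈ Finset.range (t+1),
          f s * sol b delta (t + 2 - s) n =
          f s * sol b delta (t + 1 - s) (n+1) + f s * sol b delta (t + 1 - s) (n-1)
            - b n * (f s * sol b delta (t + 1 - s) n) - f s * sol b delta (t - s) n := by
        intro s hs
        simp only [Finset.mem_range] at hs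
        have h2 : t + 2 - s = (t - s) + 2 := by omega
        have h1 : t + 1 - s = (t - s) + 1 := by omega
        rw [h2, h1, sol_rec b delta (t-s) n hn]
        ring
      rw [Finset.sum_congr rfl key, Finset.sum_sub_distrib, Finset.sum_sub_distrib,
        Finset.sum_add_distrib, ← Finset.mul_sum]
      by_cases h1 : n = 1 <;> simp [h1, delta] <;> ring

/-- The Blagoveshchenskii form `B_{p,q} = Σ_n u^δ_{n,p} u^δ_{n,q}`. -/
noncomputable def Bf (b : ℕ → ℝ) (p q : ℕ) : ℝ :=
  ∑ n ∈ Finset.Icc 1 p, sol b delta p n * sol b delta q n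

lemma Bf_eq (b : ℕ → ℝ) (p q M : ℕ) (h : p ≤ M) :
    ∑ n ∈ Finset.Icc 1 M, sol b delta p n * sol b delta q n = Bf b p q := by
  rw [Bf, eq_comm]
  apply Finset.sum_subset
  · intro x hx; simp only [Finset.mem_Icc] at *; omega
  · intro x hx hx'
    simp only [Finset.mem_Icc] at hx hx'
    rw [sol_spatial b delta p x (by omega)]
    ring

lemma Bf_rec (b : ℕ → ℝ) (p q : ℕ) (hp : 1 ≤ p) (hq : 1 ≤ q) :
    Bf b (p+1) q + Bf b (p-1) q = Bf b p (q+1) + Bf b p (q-1) := by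
  set M := p + q + 2 with hM
  rw [← Bf_eq b (p+1) q M (by omega), ← Bf_eq b (p-1) q M (by omega),
    ← Bf_eq b p (q+1) M (by omega), ← Bf_eq b p (q-1) M (by omega)]
  obtain ⟨p', rfl⟩ : ∃ p', p = p' + 1 := ⟨p - 1, by omega⟩
  obtain ⟨q', rfl⟩ : ∃ q', q = q' + 1 := ⟨q - 1, by omega⟩
  simp only [Nat.add_sub_cancel]
  set W := fun t n => sol b delta t n with hWdef
  have hWs : ∀ t n, sol b delta t n = W t n := fun t n => rfl
  set A : ℕ → ℝ := fun n => W (p'+1) (n+1) * W (q'+1) n - W (p'+1) n * W (q'+1) (n+1)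
    with hA
  rw [← sub_eq_zero, ← Finset.sum_add_distrib, ← Finset.sum_add_distrib,
    ← Finset.sum_sub_distrib]
  have key : ∀ n ∈ Finset.Icc 1 M,
      W (p'+1+1) n * W (q'+1) n + W p' n * W (q'+1) n
      - (W (p'+1) n * W (q'+1+1) n + W (p'+1) n * W q' n)
      = A n - A (n-1) := by
    intro n hn
    simp only [Finset.mem_Icc] at hn
    have hn0 : n ≠ 0 := by omega
    obtain ⟨m, rfl⟩ : ∃ m, n = m + 1 := ⟨n - 1, by omega⟩
    simp only [hA, hWdef, Nat.add_sub_cancel]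
    rw [sol_rec b delta p' (m+1) hn0, sol_rec b delta q' (m+1) hn0]
    simp only [Nat.add_sub_cancel]
    ring
  rw [Finset.sum_congr rfl key]
  have : ∑ n ∈ Finset.Icc 1 M, (A n - A (n-1)) = ∑ i ∈ Finset.range M, (A (i+1) - A i) := by
    rw [← Finset.Ico_add_one_right_eq_Icc, Finset.sum_Ico_eq_sum_range, Nat.add_sub_cancel]
    refine Finset.sum_congr rfl fun i _ => ?_
    have h1 : 1 + i = i + 1 := by omega
    rw [h1, Nat.add_sub_cancel]
  rw [this, Finset.sum_range_sub]
  have hA0 : A 0 = 0 := by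
    simp only [hA, hWdef, sol_bdry]
    have d1 : delta (q'+1) = 0 := by simp [delta]
    have d2 : delta (p'+1) = 0 := by simp [delta]
    rw [d1, d2]; ring
  have hAM : A M = 0 := by
    simp only [hA, hWdef]
    rw [sol_spatial b delta (p'+1) (M+1) (by omega),
      sol_spatial b delta (q'+1) (M+1) (by omega)]
    ring
  rw [hA0, hAM]; ring

/-- The candidate closed form for `Bf`. -/
noncomputable def Dm (r : ℕ → ℝ) (p q : ℕ) : ℝ :=
  ∑ k ∈ Finset.Icc 1 (min p q), r (p + q - 2*k)

lemma Dm_rec (r : ℕ → ℝ) (p q : ℕ) (hp : 1 ≤ p) (hq : 1 ≤ q) :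
    Dm r (p+1) q + Dm r (p-1) q = Dm r p (q+1) + Dm r p (q-1) := by
  unfold Dm
  rcases lt_trichotomy p q with h | h | h
  · -- p < q
    rw [show min (p+1) q = p+1 by omega, show min (p-1) q = p-1 by omega,
      show min p (q+1) = p by omega, show min p (q-1) = p by omega]
    obtain ⟨p', rfl⟩ : ∃ p', p = p' + 1 := ⟨p - 1, by omega⟩
    simp only [Nat.add_sub_cancel]
    rw [Finset.sum_Icc_succ_top (by omega : 1 ≤ p' + 1 + 1),
      Finset.sum_Icc_succ_top (by omega : 1 ≤ p' + 1)
        (f := fun k => r (p' + 1 + (q-1) - 2*k))]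
    have e1 : ∑ k ∈ Finset.Icc 1 (p'+1), r (p' + 1 + 1 + q - 2*k)
        = ∑ k ∈ Finset.Icc 1 (p'+1), r (p' + 1 + (q+1) - 2*k) :=
      Finset.sum_congr rfl fun k _ => by congr 1; omega
    have e2 : ∑ k ∈ Finset.Icc 1 p', r (p' + q - 2*k)
        = ∑ k ∈ Finset.Icc 1 p', r (p' + 1 + (q-1) - 2*k) :=
      Finset.sum_congr rfl fun k _ => by congr 1; omega
    have e3 : r (p' + 1 + 1 + q - 2*(p'+1+1)) = r (p' + 1 + (q-1) - 2*(p'+1)) := by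
      congr 1; omega
    rw [e1, e2, e3]; ring
  · -- p = q
    subst h
    rw [show min (p+1) p = p by omega, show min (p-1) p = p-1 by omega,
      show min p (p+1) = p by omega, show min p (p-1) = p-1 by omega]
    have e1 : ∑ k ∈ Finset.Icc 1 p, r (p + 1 + p - 2*k)
        = ∑ k ∈ Finset.Icc 1 p, r (p + (p+1) - 2*k) :=
      Finset.sum_congr rfl fun k _ => by congr 1; omega
    have e2 : ∑ k ∈ Finset.Icc 1 (p-1), r (p - 1 + p - 2*k)
        = ∑ k ∈ Finset.Icc 1 (p-1), r (p + (p-1) - 2*k) :=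
      Finset.sum_congr rfl fun k _ => by congr 1; omega
    rw [e1, e2]
  · -- p > q
    rw [show min (p+1) q = q by omega, show min (p-1) q = q by omega,
      show min p (q+1) = q+1 by omega, show min p (q-1) = q-1 by omega]
    obtain ⟨q', rfl⟩ : ∃ q', q = q' + 1 := ⟨q - 1, by omega⟩
    simp only [Nat.add_sub_cancel]
    rw [Finset.sum_Icc_succ_top (by omega : 1 ≤ q' + 1 + 1),
      Finset.sum_Icc_succ_top (by omega : 1 ≤ q' + 1)
        (f := fun k => r (p - 1 + (q'+1) - 2*k))]
    have e1 : ∑ k ∈ Finset.Icc 1 (q'+1), r (p + 1 + (q'+1) - 2*k)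
        = ∑ k ∈ Finset.Icc 1 (q'+1), r (p + (q'+1+1) - 2*k) :=
      Finset.sum_congr rfl fun k _ => by congr 1; omega
    have e2 : ∑ k ∈ Finset.Icc 1 q', r (p - 1 + (q'+1) - 2*k)
        = ∑ k ∈ Finset.Icc 1 q', r (p + q' - 2*k) :=
      Finset.sum_congr rfl fun k _ => by congr 1; omega
    have e3 : r (p - 1 + (q'+1) - 2*(q'+1)) = r (p + (q'+1+1) - 2*(q'+1+1)) := by
      congr 1; omega
    rw [e1, e2, e3]; ring

lemma Bf_eq_Dm (b : ℕ → ℝ) : ∀ p q, Bf b p q = Dm (resp b) p q := by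
  intro p
  induction p using Nat.strong_induction_on with
  | _ p ih =>
    match p with
    | 0 =>
      intro q
      simp [Bf, Dm]
    | 1 =>
      intro q
      rw [Bf]
      rw [show Finset.Icc 1 1 = {1} from rfl, Finset.sum_singleton]
      rw [sol_one b delta 1 (by omega), if_pos rfl]
      have hd : delta 0 = 1 := by simp [delta]
      rw [hd, one_mul]
      match q with
      | 0 =>
        rw [sol_zero, if_neg (by omega)]
        simp [Dm]
      | (q'+1) =>
        rw [Dm, show min 1 (q'+1) = 1 by omega,
          show Finset.Icc 1 1 = {1} from rfl, Finset.sum_singleton]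
        rw [resp]
        congr 1
        omega
    | (p+2) =>
      intro q
      match q with
      | 0 =>
        rw [Dm, show min (p+2) 0 = 0 by omega]
        rw [Bf, Finset.sum_eq_zero]
        · simp
        · intro n hn
          simp only [Finset.mem_Icc] at hn
          rw [sol_zero, if_neg (by omega)]
          ring
      | (q'+1) =>
        have hrec := Bf_rec b (p+1) (q'+1) (by omega) (by omega)
        simp only [Nat.add_sub_cancel] at hrec
        have hd := Dm_rec (resp b) (p+1) (q'+1) (by omega) (by omega)
        simp only [Nat.add_sub_cancel] at hd
        have i1 := ih (p+1) (by omega) (q'+1+1)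
        have i2 := ih (p+1) (by omega) q'
        have i3 := ih p (by omega) (q'+1)
        have : p + 1 + 1 = p + 2 := by omega
        rw [this] at hrec hd
        linarith [hrec, hd, i1, i2, i3]

lemma Dm_eq_Cmat (r : ℕ → ℝ) (T s s' : ℕ) (hs : s < T) (hs' : s' < T) :
    Dm r (T - s) (T - s') = Cmat r T (s'+1) (s+1) := by
  rw [Dm, Cmat]
  have hm : min (T-s) (T-s') = T - max (s'+1) (s+1) + 1 := by omega
  rw [hm]
  set m := T - max (s'+1) (s+1) + 1 with hmdef
  rw [← Finset.Ico_add_one_right_eq_Icc, Finset.sum_Ico_eq_sum_range, Nat.add_sub_cancel,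
    ← Finset.sum_range_reflect]
  apply Finset.sum_congr rfl
  intro k hk
  simp only [Finset.mem_range] at hk
  congr 1
  omega

/-- Representation of the connecting form in terms of the response vector. -/
theorem connecting_operator_representation (b : ℕ → ℝ) (T : ℕ) (hT : 1 ≤ T) (f g : ℕ → ℝ)
    (hf : ∀ t, T ≤ t → f t = 0) (hg : ∀ t, T ≤ t → g t = 0) :
    ∑ n ∈ Finset.Icc 1 T, sol b f T n * sol b g T n =
      ∑ i ∈ Finset.Icc 1 T, ∑ j ∈ Finset.Icc 1 T,
        Cmat (resp b) T i j * f (j - 1) * g (i - 1) := by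
  have hconv : ∀ n ∈ Finset.Icc 1 T, sol b f T n * sol b g T n
      = ∑ s ∈ Finset.range (T+1), ∑ s' ∈ Finset.range (T+1),
          f s * g s' * (sol b delta (T-s) n * sol b delta (T-s') n) := by
    intro n hn
    simp only [Finset.mem_Icc] at hn
    rw [sol_conv b f T n (by omega), sol_conv b g T n (by omega), Finset.sum_mul_sum]
    exact Finset.sum_congr rfl fun s _ => Finset.sum_congr rfl fun s' _ => by ring
  rw [Finset.sum_congr rfl hconv, Finset.sum_comm]
  have hswap : ∀ s ∈ Finset.range (T+1),
      ∑ n ∈ Finset.Icc 1 T, ∑ s' ∈ Finset.range (T+1),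
          f s * g s' * (sol b delta (T-s) n * sol b delta (T-s') n)
      = ∑ s' ∈ Finset.range (T+1),
          f s * g s' * Dm (resp b) (T-s) (T-s') := by
    intro s _
    rw [Finset.sum_comm]
    refine Finset.sum_congr rfl fun s' _ => ?_
    rw [← Finset.mul_sum, Bf_eq b (T-s) (T-s') T (by omega), Bf_eq_Dm]
  rw [Finset.sum_congr rfl hswap]
  -- drop the s = T and s' = T terms
  rw [Finset.sum_range_succ]
  have hlast : ∑ s' ∈ Finset.range (T+1),
      f T * g s' * Dm (resp b) (T-T) (T-s') = 0 := by
    apply Finset.sum_eq_zero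
    intro s' _
    rw [hf T le_rfl]; ring
  rw [hlast, add_zero]
  have hinner : ∀ s ∈ Finset.range T,
      ∑ s' ∈ Finset.range (T+1), f s * g s' * Dm (resp b) (T-s) (T-s')
      = ∑ s' ∈ Finset.range T, f s * g s' * Dm (resp b) (T-s) (T-s') := by
    intro s _
    rw [Finset.sum_range_succ, hg T le_rfl]
    ring
  rw [Finset.sum_congr rfl hinner, Finset.sum_comm]
  -- reindex to Icc
  rw [show Finset.Icc 1 T = Finset.Ico 1 (T+1) by rw [Finset.Ico_add_one_right_eq_Icc],
    Finset.sum_Ico_eq_sum_range, Nat.succ_sub_one]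
  refine Finset.sum_congr rfl fun s' hs' => ?_
  simp only [Finset.mem_range] at hs'
  rw [Finset.sum_Ico_eq_sum_range, Nat.succ_sub_one]
  refine Finset.sum_congr rfl fun s hs => ?_
  simp only [Finset.mem_range] at hs
  rw [show 1 + s' = s' + 1 by omega, show 1 + s = s + 1 by omega,
    Nat.add_sub_cancel, Nat.add_sub_cancel,
    ← Dm_eq_Cmat (resp b) T s s' hs hs']
  ring
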